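/- Let R → S be a flat Ohm-Rush algebra and W ⊆ R a multiplicative set of regular elements. If W⁻¹R → W⁻¹S is McCoy, then R → S is McCoy. -/

import Mathlib

/-- The Ohm-Rush content of `f ∈ S`: the intersection of all ideals `I` of `R`
with `f ∈ IS`. -/
def orContent (R : Type*) [CommRing R] {S : Type*} [CommRing S] [Algebra R S] (f : S) :
    Ideal R :=
  sInf {I : Ideal R | f ∈ I.map (algebraMap R S)}

/-- `S` is an Ohm-Rush `R`-algebra if each `f ∈ S` lies in `c(f)S`,
i.e. there is a minimal ideal `I` with `f ∈ IS`. -/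
def IsOhmRush (R S : Type*) [CommRing R] [CommRing S] [Algebra R S] : Prop :=
  ∀ f : S, f ∈ (orContent R f).map (algebraMap R S)

/-- `S` is a McCoy `R`-algebra if whenever `f * g = 0` with `g ≠ 0`,
some nonzero `r ∈ R` annihilates the content of `f`. -/
def IsMcCoy (R S : Type*) [CommRing R] [CommRing S] [Algebra R S] : Prop :=
  ∀ f g : S, f * g = 0 → g ≠ 0 → ∃ r : R, r ≠ 0 ∧ ∀ a ∈ orContent R f, r * a = 0

/-- `S` is a weak content `R`-algebra: Ohm-Rush and `rad c(fg) = rad (c(f)c(g))`. -/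
def IsWeakContent (R S : Type*) [CommRing R] [CommRing S] [Algebra R S] : Prop :=
  IsOhmRush R S ∧ ∀ f g : S,
    (orContent R (f * g)).radical = (orContent R f * orContent R g).radical

/-- Property (A): every finitely generated ideal consisting of zero-divisors
has a nonzero annihilator. -/
def HasPropertyA (R : Type*) [CommRing R] : Prop :=
  ∀ J : Ideal R, J.FG → (∀ a ∈ J, a ∉ nonZeroDivisors R) →
    ∃ r : R, r ≠ 0 ∧ ∀ a ∈ J, a * r = 0

/-- Fidel (A): every quotient has property (A). -/
def HasFidelA (R : Type*) [CommRing R] : Prop :=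
  ∀ I : Ideal R, HasPropertyA (R ⧸ I)

/-- `S` is a semicontent `R`-algebra: faithfully flat, Ohm-Rush, and for every
multiplicative set `W ⊆ R` meeting `c(f)`, `c(fg)` and `c(g)` agree after
localizing at `W`. -/
def IsSemicontent (R S : Type*) [CommRing R] [CommRing S] [Algebra R S] : Prop :=
  Module.FaithfullyFlat R S ∧ IsOhmRush R S ∧
    ∀ (W : Submonoid R) (f g : S), (∃ w ∈ W, w ∈ orContent R f) →
      (orContent R (f * g)).map (algebraMap R (Localization W)) =
        (orContent R g).map (algebraMap R (Localization W))

open TensorProduct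

section Aux
variable {R S : Type*} [CommRing R] [CommRing S] [Algebra R S]

/-- Flat colon lemma. -/
theorem flat_colon [Module.Flat R S] (I : Ideal R) (w : R) (f : S)
    (h : algebraMap R S w * f ∈ I.map (algebraMap R S)) :
    f ∈ (I.colon (Ideal.span {w})).map (algebraMap R S) := by
  classical
  set K := I.colon (Ideal.span {w}) with hK
  let φ : R →ₗ[R] R ⧸ (I : Submodule R R) := (Submodule.mkQ _) ∘ₗ (LinearMap.lsmul R R w)
  have hexact : Function.Exact (Submodule.subtype (K : Submodule R R)) φ := by
    rw [LinearMap.exact_iff]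
    ext x
    simp only [LinearMap.mem_ker, LinearMap.coe_comp, Function.comp_apply,
      LinearMap.lsmul_apply, Submodule.mkQ_apply, Submodule.Quotient.mk_eq_zero,
      Submodule.range_subtype, φ]
    rw [smul_eq_mul]
    constructor
    · intro hx
      exact Ideal.mem_colon_span_singleton.mpr (by rwa [mul_comm])
    · intro hx
      have := Ideal.mem_colon_span_singleton.mp hx
      rwa [mul_comm]
  have hE := Module.Flat.lTensor_exact S hexact
  have h0 : (LinearMap.lTensor S φ) (f ⊗ₜ (1 : R)) = 0 := by
    have h1 : (LinearMap.lTensor S φ) (f ⊗ₜ (1 : R)) = f ⊗ₜ (Ideal.Quotient.mk I w) := by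
      simp [φ, Ideal.Quotient.mk_eq_mk, Submodule.Quotient.mk]
      rfl
    rw [h1]
    have h2 : (tensorQuotEquivQuotSMul S I) (f ⊗ₜ (Ideal.Quotient.mk I w)) = 0 := by
      rw [tensorQuotEquivQuotSMul_tmul_mk, Submodule.Quotient.mk_eq_zero]
      rw [Ideal.smul_top_eq_map]
      simpa [Algebra.smul_def] using h
    exact (LinearEquiv.map_eq_zero_iff _).mp h2
  obtain ⟨z, hz⟩ := (hE _).mp h0
  have hf : f = (TensorProduct.rid R S) ((LinearMap.lTensor S (Submodule.subtype
      (K : Submodule R R))) z) := by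
    rw [hz]; simp
  rw [hf]
  have : ∀ z : S ⊗[R] (K : Submodule R R),
      (TensorProduct.rid R S) ((LinearMap.lTensor S (Submodule.subtype (K : Submodule R R))) z)
        ∈ K.map (algebraMap R S) := by
    intro z
    induction z with
    | zero => simp
    | tmul s k =>
        simp only [LinearMap.lTensor_tmul, Submodule.coe_subtype, TensorProduct.rid_tmul]
        rw [Algebra.smul_def]
        exact Ideal.mul_mem_right s _ (Ideal.mem_map_of_mem _ k.2)
    | add x y hx hy => rw [map_add, map_add]; exact Ideal.add_mem _ hx hy
  exact this z

/-- Flatness: regular elements map to regular elements. -/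
theorem flat_regular [Module.Flat R S] {w : R} (hw : w ∈ nonZeroDivisors R) :
    algebraMap R S w ∈ nonZeroDivisors S := by
  have hreg : IsSMulRegular R w := by
    intro x y hxy
    simp only [smul_eq_mul] at hxy
    have h0 : (x - y) * w = 0 := by rw [sub_mul, mul_comm x w, mul_comm y w, hxy, sub_self]
    exact sub_eq_zero.mp (hw.2 _ h0)
  have hS : IsSMulRegular S w := by
    have hT : IsSMulRegular (S ⊗[R] R) w := hreg.lTensor S
    intro x y hxy
    have e := TensorProduct.rid R S
    have : e.symm x = e.symm y := by
      apply hT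
      show w • e.symm x = w • e.symm y
      have h1 : e.symm (w • x) = w • e.symm x := map_smul _ _ _
      have h2 : e.symm (w • y) = w • e.symm y := map_smul _ _ _
      rw [← h1, ← h2]
      exact congrArg e.symm hxy
    exact e.symm.injective this
  suffices H : ∀ s, s * algebraMap R S w = 0 → s = 0 from
    mem_nonZeroDivisors_iff.2 ⟨fun s hs => H s (by rwa [mul_comm]), H⟩
  intro s hs
  have : w • s = 0 := by rw [Algebra.smul_def, mul_comm]; exact hs
  have h0 : w • s = w • (0 : S) := by rw [this, smul_zero]
  exact hS h0

end Aux

/-- If `R → S` is a flat Ohm-Rush algebra, `W ⊆ R` a multiplicative set of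
regular elements, and `W⁻¹R → W⁻¹S` is McCoy, then `R → S` is McCoy. -/
theorem stmt_7 (R S : Type*) [CommRing R] [CommRing S] [Algebra R S]
    [Module.Flat R S] (hOR : IsOhmRush R S)
    (W : Submonoid R) (hW : W ≤ nonZeroDivisors R)
    (hMc :
      letI := localizationAlgebra W S (Rₘ := Localization W)
        (Sₘ := Localization (Algebra.algebraMapSubmonoid S W))
      IsMcCoy (Localization W) (Localization (Algebra.algebraMapSubmonoid S W))) :
    IsMcCoy R S := by
  classical
  set Rₘ := Localization W
  set T := Algebra.algebraMapSubmonoid S W with hTdef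
  set Sₘ := Localization T
  letI : Algebra Rₘ Sₘ := localizationAlgebra W S
  have hcomp : (algebraMap Rₘ Sₘ).comp (algebraMap R Rₘ) =
      (algebraMap S Sₘ).comp (algebraMap R S) :=
    IsLocalization.map_comp (T := T) (Q := Sₘ)
      (show W ≤ T.comap (algebraMap R S) from W.le_comap_map)
  intro f g hfg hg0
  have hT : T ≤ nonZeroDivisors S := by
    rintro t ⟨w, hw, rfl⟩
    exact flat_regular (hW hw)
  have hSinj : Function.Injective (algebraMap S Sₘ) := IsLocalization.injective (M := T) Sₘ hT
  have hg' : algebraMap S Sₘ g ≠ 0 := fun h => hg0 (hSinj (by simpa using h))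
  obtain ⟨r', hr'0, hr'⟩ := hMc (algebraMap S Sₘ f) (algebraMap S Sₘ g)
    (by rw [← map_mul, hfg, map_zero]) hg'
  obtain ⟨⟨r, w⟩, (hrw : IsLocalization.mk' Rₘ r w = r')⟩ := IsLocalization.mk'_surjective W r'
  refine ⟨r, ?_, ?_⟩
  · rintro rfl
    rw [IsLocalization.mk'_zero] at hrw
    exact hr'0 hrw.symm
  · intro a ha
    -- key: a/1 ∈ orContent Rₘ f'
    have key : algebraMap R Rₘ a ∈ orContent Rₘ (algebraMap S Sₘ f) := by
      apply Submodule.mem_sInf.mpr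
      intro J hJ
      simp only [Set.mem_setOf_eq] at hJ
      set I := Ideal.comap (algebraMap R Rₘ) J with hIdef
      have hJI : I.map (algebraMap R Rₘ) = J := IsLocalization.map_comap W Rₘ J
      have hf' : algebraMap S Sₘ f ∈ (I.map (algebraMap R S)).map (algebraMap S Sₘ) := by
        rw [Ideal.map_map, ← hcomp, ← Ideal.map_map, hJI]
        exact hJ
      obtain ⟨⟨⟨af, haf⟩, t⟩, ht⟩ := (IsLocalization.mem_map_algebraMap_iff T Sₘ).mp hf'
      obtain ⟨w₂, hw₂, hw₂t⟩ := t.2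
      have hfw : algebraMap R S w₂ * f ∈ I.map (algebraMap R S) := by
        have : algebraMap S Sₘ (f * (t : S)) = algebraMap S Sₘ af := by
          rw [map_mul]; exact ht
        have hft : f * (t : S) = af := hSinj this
        rw [← hw₂t] at hft
        rw [mul_comm, hft]
        exact haf
      have hcf : a ∈ I.colon (Ideal.span {w₂}) :=
        Submodule.mem_sInf.mp ha _ (flat_colon I w₂ f hfw)
      have haw : a * w₂ ∈ I := Ideal.mem_colon_span_singleton.mp hcf
      -- a/1 = (w₂/1)⁻¹ * (a*w₂)/1 ∈ J
      have hmem : algebraMap R Rₘ (a * w₂) ∈ J := by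
        rw [← hJI]; exact Ideal.mem_map_of_mem _ haw
      obtain ⟨u, hu⟩ := IsLocalization.map_units Rₘ (⟨w₂, hw₂⟩ : W)
      have : algebraMap R Rₘ a = (↑u⁻¹ : Rₘ) * algebraMap R Rₘ (a * w₂) := by
        rw [map_mul, ← hu]
        rw [mul_comm (algebraMap R Rₘ a), ← mul_assoc]
        simp
      rw [this]
      exact Ideal.mul_mem_left _ _ hmem
    have hz := hr' _ key
    rw [← hrw] at hz
    rw [mul_comm, IsLocalization.mul_mk'_eq_mk'_of_mul] at hz
    obtain ⟨m, hm⟩ := (IsLocalization.mk'_eq_zero_iff _ _).mp hz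
    have : (a * r) * (m : R) = 0 := by rw [mul_comm]; exact hm
    have h0 : a * r = 0 := (hW m.2).2 _ this
    rw [mul_comm] at h0
    exact h0
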